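/- Define a Gaussian kernel on ℝⁿ×ℝⁿ by U_S(x,y) = det(C/(4π))^{1/2} exp(−S(x,y)) where S(x,y) = (1/4)⟨x,Ax⟩ − (1/2)⟨x,Cy⟩ + (1/4)⟨y,By⟩ with A, B real symmetric positive definite and C invertible such that the combined 2n×2n quadratic form has positive definite real part. Then the convolution (U_S ∘ U_{S'})(x,z) = ∫_{ℝⁿ} U_S(x,y) U_{S'}(y,z) dy is again a Gaussian kernel U_{S̃} with Ã = A − C(B+A')⁻¹Cᵀ, B̃ = B' − C'ᵀ(B+A')⁻¹C', C̃ = C(B+A')⁻¹C'. -/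

import Mathlib

open Matrix MeasureTheory Real

/-- The quadratic pairing `⟨x, M y⟩ = ∑ᵢⱼ xᵢ Mᵢⱼ yⱼ`. -/
def quadPair (n : ℕ) (M : Matrix (Fin n) (Fin n) ℝ) (x y : Fin n → ℝ) : ℝ :=
  ∑ i, ∑ j, x i * M i j * y j

/-- The Gaussian kernel `U_S(x,y) = det(C/(4π))^{1/2} exp(−S(x,y))` with
`S(x,y) = (1/4)⟨x,Ax⟩ − (1/2)⟨x,Cy⟩ + (1/4)⟨y,By⟩`. -/
noncomputable def gaussKer (n : ℕ) (A B C : Matrix (Fin n) (Fin n) ℝ)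
    (x y : Fin n → ℝ) : ℝ :=
  Real.sqrt (|C.det| / (4 * π) ^ n) *
    Real.exp (-((1 / 4) * quadPair n A x x - (1 / 2) * quadPair n C x y
      + (1 / 4) * quadPair n B y y))

lemma quadPair_eq_dot (n : ℕ) (M : Matrix (Fin n) (Fin n) ℝ) (x y : Fin n → ℝ) :
    quadPair n M x y = x ⬝ᵥ M *ᵥ y := by
  simp [quadPair, dotProduct, mulVec, Finset.mul_sum, mul_assoc]

lemma dot_shift {n : ℕ} (N : Matrix (Fin n) (Fin n) ℝ) (u v : Fin n → ℝ) :
    (Nᵀ *ᵥ u) ⬝ᵥ v = u ⬝ᵥ (N *ᵥ v) := by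
  rw [mulVec_transpose, ← dotProduct_mulVec]

lemma dot_flip {n : ℕ} (u : Fin n → ℝ) (P : Matrix (Fin n) (Fin n) ℝ) (v : Fin n → ℝ) :
    u ⬝ᵥ P *ᵥ v = v ⬝ᵥ Pᵀ *ᵥ u := by
  rw [dotProduct_mulVec, ← mulVec_transpose, dotProduct_comm]

lemma dot_symm {n : ℕ} {P : Matrix (Fin n) (Fin n) ℝ} (hP : Pᵀ = P) (u v : Fin n → ℝ) :
    u ⬝ᵥ P *ᵥ v = v ⬝ᵥ P *ᵥ u := by
  rw [dot_flip, hP]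

lemma tripleDot {n : ℕ} (P Q R : Matrix (Fin n) (Fin n) ℝ) (u v : Fin n → ℝ) :
    (Pᵀ *ᵥ u) ⬝ᵥ (Q *ᵥ (R *ᵥ v)) = u ⬝ᵥ ((P * Q * R) *ᵥ v) := by
  rw [dot_shift, mulVec_mulVec, mulVec_mulVec]

lemma posdef_transpose_eq {n : ℕ} {M : Matrix (Fin n) (Fin n) ℝ} (hM : M.IsHermitian) :
    Mᵀ = M := hM

lemma sqrt_pow_nat {a : ℝ} (ha : 0 ≤ a) {n : ℕ} : Real.sqrt (a ^ n) = Real.sqrt a ^ n := by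
  induction n with
  | zero => simp
  | succ k ih => rw [pow_succ, pow_succ, Real.sqrt_mul (pow_nonneg ha k), ih]

lemma aux_change (n : ℕ) (S : Matrix (Fin n) (Fin n) ℝ) (hdetS_pos : 0 < S.det)
    (f : (Fin n → ℝ) → ℝ) (hf_cont : Continuous f) :
    ∫ y : Fin n → ℝ, f (S *ᵥ y) = (S.det)⁻¹ * ∫ v : Fin n → ℝ, f v := by
  have hmeas : Measurable (toLin' S) := (LinearMap.continuous_on_pi _).measurable
  have hmap := Real.map_matrix_volume_pi_eq_smul_volume_pi (M := S) hdetS_pos.ne'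
  have : ∫ y : Fin n → ℝ, f (S *ᵥ y)
      = ∫ v, f v ∂(Measure.map (toLin' S) volume) := by
    rw [integral_map hmeas.aemeasurable (hf_cont.aestronglyMeasurable)]
    simp [toLin'_apply]
  rw [this, hmap, integral_smul_measure, ENNReal.toReal_ofReal (by positivity),
    abs_of_nonneg (by positivity), smul_eq_mul]

lemma aux_std (n : ℕ) :
    ∫ v : Fin n → ℝ, Real.exp (-(1 / 4 * (v ⬝ᵥ v))) = Real.sqrt (4 * π) ^ n := by
  have key : ∀ v : Fin n → ℝ, Real.exp (-(1 / 4 * (v ⬝ᵥ v)))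
      = ∏ i, Real.exp (-(1 / 4 : ℝ) * (v i) ^ 2) := by
    intro v
    rw [← Real.exp_sum]
    congr 1
    rw [show v ⬝ᵥ v = ∑ i, v i ^ 2 by simp [dotProduct, sq], Finset.mul_sum,
      ← Finset.sum_neg_distrib]
    exact Finset.sum_congr rfl fun i _ => by ring
  simp_rw [key]
  rw [volume_pi, MeasureTheory.integral_fin_nat_prod_eq_prod
    (f := fun _ (t : ℝ) => Real.exp (-(1 / 4 : ℝ) * t ^ 2))]
  have h : ∫ t : ℝ, Real.exp (-(1 / 4 : ℝ) * t ^ 2) = Real.sqrt (4 * π) := by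
    have := integral_gaussian (1 / 4 : ℝ)
    simp only [neg_mul] at this ⊢
    rw [this, div_div_eq_mul_div, div_one, mul_comm]
  rw [Finset.prod_const, Finset.card_univ, Fintype.card_fin, h]

lemma aux_cont (n : ℕ) : Continuous (fun v : Fin n → ℝ => Real.exp (-(1 / 4 * (v ⬝ᵥ v)))) := by
  apply Real.continuous_exp.comp
  apply Continuous.neg
  apply Continuous.mul continuous_const
  exact continuous_finset_sum _ fun i _ => (continuous_apply i).mul (continuous_apply i)

open scoped MatrixOrder in
lemma gauss_centered {n : ℕ} {M : Matrix (Fin n) (Fin n) ℝ} (hM : M.PosDef) :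
    ∫ y : Fin n → ℝ, Real.exp (-(1 / 4 * (y ⬝ᵥ M *ᵥ y)))
      = Real.sqrt ((4 * π) ^ n / M.det) := by
  have hSsym : (CFC.sqrt M)ᵀ = CFC.sqrt M :=
    posdef_transpose_eq (CFC.sqrt_nonneg M).posSemidef.isHermitian
  have hSS : CFC.sqrt M * CFC.sqrt M = M := CFC.sqrt_mul_sqrt_self M hM.posSemidef.nonneg
  have hdetM : 0 < M.det := hM.det_pos
  have hdetS_nonneg : 0 ≤ (CFC.sqrt M).det := by
    have hs := (CFC.sqrt_nonneg M).posSemidef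
    rw [hs.isHermitian.det_eq_prod_eigenvalues]
    exact Finset.prod_nonneg fun i _ => by simpa using hs.eigenvalues_nonneg i
  have hdetS : (CFC.sqrt M).det = Real.sqrt M.det := by
    have : (CFC.sqrt M).det * (CFC.sqrt M).det = M.det := by
      rw [← det_mul, hSS]
    rw [← this, Real.sqrt_mul_self hdetS_nonneg]
  have hdetS_pos : 0 < (CFC.sqrt M).det := by
    rw [hdetS]; exact Real.sqrt_pos.2 hdetM
  have hquad : ∀ y : Fin n → ℝ,
      y ⬝ᵥ M *ᵥ y = (CFC.sqrt M *ᵥ y) ⬝ᵥ (CFC.sqrt M *ᵥ y) := by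
    intro y
    symm
    nth_rewrite 1 [← hSsym]
    rw [dot_shift, mulVec_mulVec, hSS]
  calc ∫ y : Fin n → ℝ, Real.exp (-(1 / 4 * (y ⬝ᵥ M *ᵥ y)))
      = ∫ y : Fin n → ℝ, Real.exp (-(1 / 4 *
          ((CFC.sqrt M *ᵥ y) ⬝ᵥ (CFC.sqrt M *ᵥ y)))) := by
        simp_rw [hquad]
    _ = ((CFC.sqrt M).det)⁻¹
        * ∫ v : Fin n → ℝ, Real.exp (-(1 / 4 * (v ⬝ᵥ v))) :=
        aux_change n _ hdetS_pos _ (aux_cont n)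
    _ = ((CFC.sqrt M).det)⁻¹ * Real.sqrt (4 * π) ^ n := by rw [aux_std]
    _ = Real.sqrt ((4 * π) ^ n / M.det) := by
        rw [hdetS, Real.sqrt_div' _ hdetM.le, sqrt_pow_nat (by positivity), inv_mul_eq_div]

lemma gauss_linear {n : ℕ} {M : Matrix (Fin n) (Fin n) ℝ} (hM : M.PosDef) (w : Fin n → ℝ) :
    ∫ y : Fin n → ℝ, Real.exp (-(1 / 4 * (y ⬝ᵥ M *ᵥ y)) + y ⬝ᵥ w)
      = Real.sqrt ((4 * π) ^ n / M.det) * Real.exp (w ⬝ᵥ M⁻¹ *ᵥ w) := by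
  have hMsym : Mᵀ = M := posdef_transpose_eq hM.isHermitian
  have hMinvsym : (M⁻¹)ᵀ = M⁻¹ := posdef_transpose_eq hM.inv.isHermitian
  have hMa : M *ᵥ ((2 : ℝ) • (M⁻¹ *ᵥ w)) = (2 : ℝ) • w := by
    rw [mulVec_smul, mulVec_mulVec, mul_nonsing_inv _ hM.det_pos.ne'.isUnit, one_mulVec]
  have h1 : ∀ y : Fin n → ℝ, y ⬝ᵥ M *ᵥ ((2 : ℝ) • (M⁻¹ *ᵥ w)) = 2 * (y ⬝ᵥ w) := by
    intro y; rw [hMa, dotProduct_smul, smul_eq_mul]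
  have haw : ((2 : ℝ) • (M⁻¹ *ᵥ w)) ⬝ᵥ w = 2 * (w ⬝ᵥ M⁻¹ *ᵥ w) := by
    rw [smul_dotProduct, smul_eq_mul, dotProduct_comm]
  have key : ∀ y : Fin n → ℝ,
      Real.exp (-(1 / 4 * ((y + (2 : ℝ) • (M⁻¹ *ᵥ w)) ⬝ᵥ M *ᵥ (y + (2 : ℝ) • (M⁻¹ *ᵥ w))))
          + (y + (2 : ℝ) • (M⁻¹ *ᵥ w)) ⬝ᵥ w)
        = Real.exp (w ⬝ᵥ M⁻¹ *ᵥ w) * Real.exp (-(1 / 4 * (y ⬝ᵥ M *ᵥ y))) := by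
    intro y
    rw [← Real.exp_add]
    congr 1
    have expand : (y + (2 : ℝ) • (M⁻¹ *ᵥ w)) ⬝ᵥ M *ᵥ (y + (2 : ℝ) • (M⁻¹ *ᵥ w))
        = y ⬝ᵥ M *ᵥ y + y ⬝ᵥ M *ᵥ ((2 : ℝ) • (M⁻¹ *ᵥ w))
          + ((2 : ℝ) • (M⁻¹ *ᵥ w)) ⬝ᵥ M *ᵥ y
          + ((2 : ℝ) • (M⁻¹ *ᵥ w)) ⬝ᵥ M *ᵥ ((2 : ℝ) • (M⁻¹ *ᵥ w)) := by
      simp only [mulVec_add, dotProduct_add, add_dotProduct]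
      ring
    have h2 : ((2 : ℝ) • (M⁻¹ *ᵥ w)) ⬝ᵥ M *ᵥ y = 2 * (y ⬝ᵥ w) := by
      rw [dot_symm hMsym, h1]
    have h3 : ((2 : ℝ) • (M⁻¹ *ᵥ w)) ⬝ᵥ M *ᵥ ((2 : ℝ) • (M⁻¹ *ᵥ w))
        = 4 * (w ⬝ᵥ M⁻¹ *ᵥ w) := by
      rw [hMa, dotProduct_smul, smul_eq_mul, haw]; ring
    have h4 : (y + (2 : ℝ) • (M⁻¹ *ᵥ w)) ⬝ᵥ w = y ⬝ᵥ w + 2 * (w ⬝ᵥ M⁻¹ *ᵥ w) := by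
      rw [add_dotProduct, haw]
    rw [expand, h1, h2, h3, h4]
    ring
  calc ∫ y : Fin n → ℝ, Real.exp (-(1 / 4 * (y ⬝ᵥ M *ᵥ y)) + y ⬝ᵥ w)
      = ∫ y : Fin n → ℝ,
          Real.exp (-(1 / 4 * ((y + (2 : ℝ) • (M⁻¹ *ᵥ w)) ⬝ᵥ M *ᵥ
            (y + (2 : ℝ) • (M⁻¹ *ᵥ w)))) + (y + (2 : ℝ) • (M⁻¹ *ᵥ w)) ⬝ᵥ w) :=
        (integral_add_right_eq_self
          (fun y : Fin n → ℝ => Real.exp (-(1 / 4 * (y ⬝ᵥ M *ᵥ y)) + y ⬝ᵥ w))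
          ((2 : ℝ) • (M⁻¹ *ᵥ w))).symm
    _ = ∫ y : Fin n → ℝ,
          Real.exp (w ⬝ᵥ M⁻¹ *ᵥ w) * Real.exp (-(1 / 4 * (y ⬝ᵥ M *ᵥ y))) := by
        simp_rw [key]
    _ = Real.exp (w ⬝ᵥ M⁻¹ *ᵥ w) * ∫ y : Fin n → ℝ,
          Real.exp (-(1 / 4 * (y ⬝ᵥ M *ᵥ y))) := integral_const_mul _ _
    _ = Real.sqrt ((4 * π) ^ n / M.det) * Real.exp (w ⬝ᵥ M⁻¹ *ᵥ w) := by
        rw [gauss_centered hM]; ring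

/-- The convolution of two Gaussian kernels is again a Gaussian
kernel, with `Ã = A − C(B+A')⁻¹Cᵀ`, `B̃ = B' − C'ᵀ(B+A')⁻¹C'`, `C̃ = C(B+A')⁻¹C'`. -/
theorem gaussKer_convolution
    (n : ℕ) (A B C A' B' C' : Matrix (Fin n) (Fin n) ℝ)
    (hA : A.PosDef) (hB : B.PosDef) (hA' : A'.PosDef) (hB' : B'.PosDef)
    (hC : IsUnit C.det) (hC' : IsUnit C'.det)
    (hpos : (Matrix.fromBlocks A (-C) (-Cᵀ) B).PosDef)
    (hpos' : (Matrix.fromBlocks A' (-C') (-C'ᵀ) B').PosDef) :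
    ∀ x z : Fin n → ℝ,
      (∫ y : Fin n → ℝ, gaussKer n A B C x y * gaussKer n A' B' C' y z)
        = gaussKer n (A - C * (B + A')⁻¹ * Cᵀ) (B' - C'ᵀ * (B + A')⁻¹ * C')
            (C * (B + A')⁻¹ * C') x z := by
  intro x z
  have hM : (B + A').PosDef := hB.add hA'
  have hMinvsym : ((B + A')⁻¹)ᵀ = (B + A')⁻¹ := posdef_transpose_eq hM.inv.isHermitian
  have hdM : 0 < (B + A').det := hM.det_pos
  -- step 1: rewrite the integrand
  have key : ∀ y : Fin n → ℝ, gaussKer n A B C x y * gaussKer n A' B' C' y z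
      = (Real.sqrt (|C.det| / (4 * π) ^ n) * Real.sqrt (|C'.det| / (4 * π) ^ n)
          * Real.exp (-(1 / 4 * (x ⬝ᵥ A *ᵥ x) + 1 / 4 * (z ⬝ᵥ B' *ᵥ z))))
        * Real.exp (-(1 / 4 * (y ⬝ᵥ (B + A') *ᵥ y))
            + y ⬝ᵥ ((1 / 2 : ℝ) • (Cᵀ *ᵥ x + C' *ᵥ z))) := by
    intro y
    simp only [gaussKer]
    have comb : ∀ s1 s2 k e1 e2 E : ℝ, e1 + e2 = -k + E →
        (s1 * Real.exp e1) * (s2 * Real.exp e2) = (s1 * s2 * Real.exp (-k)) * Real.exp E := by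
      intro s1 s2 k e1 e2 E h
      rw [mul_mul_mul_comm, ← Real.exp_add, h, Real.exp_add]
      ring
    refine comb _ _ _ _ _ _ ?_
    simp only [quadPair_eq_dot]
    rw [dot_flip x C y, add_mulVec, dotProduct_add]
    simp only [dotProduct_smul, dotProduct_add, smul_eq_mul]
    ring
  -- step 2: compute the integral
  have step2 : (∫ y : Fin n → ℝ, gaussKer n A B C x y * gaussKer n A' B' C' y z)
      = (Real.sqrt (|C.det| / (4 * π) ^ n) * Real.sqrt (|C'.det| / (4 * π) ^ n)
          * Real.exp (-(1 / 4 * (x ⬝ᵥ A *ᵥ x) + 1 / 4 * (z ⬝ᵥ B' *ᵥ z))))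
        * (Real.sqrt ((4 * π) ^ n / (B + A').det)
          * Real.exp (((1 / 2 : ℝ) • (Cᵀ *ᵥ x + C' *ᵥ z)) ⬝ᵥ (B + A')⁻¹ *ᵥ
              ((1 / 2 : ℝ) • (Cᵀ *ᵥ x + C' *ᵥ z)))) := by
    simp_rw [key]
    rw [integral_const_mul, gauss_linear hM]
  rw [step2]
  -- step 3a: the prefactor
  have hdet3 : (C * (B + A')⁻¹ * C').det = C.det * ((B + A').det)⁻¹ * C'.det := by
    rw [det_mul, det_mul, det_nonsing_inv, Ring.inverse_eq_inv']
  have habs : |(C * (B + A')⁻¹ * C').det| = |C.det| * ((B + A').det)⁻¹ * |C'.det| := by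
    rw [hdet3, abs_mul, abs_mul, abs_inv, abs_of_pos hdM]
  have h4π : (0 : ℝ) < (4 * π) ^ n := by positivity
  have hpre : Real.sqrt (|C.det| / (4 * π) ^ n) * Real.sqrt (|C'.det| / (4 * π) ^ n)
      * Real.sqrt ((4 * π) ^ n / (B + A').det)
      = Real.sqrt (|(C * (B + A')⁻¹ * C').det| / (4 * π) ^ n) := by
    rw [← Real.sqrt_mul (by positivity), ← Real.sqrt_mul (by positivity)]
    congr 1
    rw [habs]
    field_simp
  -- step 3b: the exponent
  have t11 : (Cᵀ *ᵥ x) ⬝ᵥ (B + A')⁻¹ *ᵥ (Cᵀ *ᵥ x)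
      = x ⬝ᵥ (C * (B + A')⁻¹ * Cᵀ) *ᵥ x := tripleDot C _ _ x x
  have t12 : (Cᵀ *ᵥ x) ⬝ᵥ (B + A')⁻¹ *ᵥ (C' *ᵥ z)
      = x ⬝ᵥ (C * (B + A')⁻¹ * C') *ᵥ z := tripleDot C _ _ x z
  have t21 : (C' *ᵥ z) ⬝ᵥ (B + A')⁻¹ *ᵥ (Cᵀ *ᵥ x)
      = x ⬝ᵥ (C * (B + A')⁻¹ * C') *ᵥ z := by
    rw [dot_symm hMinvsym, t12]
  have t22 : (C' *ᵥ z) ⬝ᵥ (B + A')⁻¹ *ᵥ (C' *ᵥ z)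
      = z ⬝ᵥ (C'ᵀ * (B + A')⁻¹ * C') *ᵥ z := by
    conv_lhs => rw [show C' *ᵥ z = C'ᵀᵀ *ᵥ z by rw [transpose_transpose]]
    rw [tripleDot, transpose_transpose]
  have hw : ((1 / 2 : ℝ) • (Cᵀ *ᵥ x + C' *ᵥ z)) ⬝ᵥ (B + A')⁻¹ *ᵥ
        ((1 / 2 : ℝ) • (Cᵀ *ᵥ x + C' *ᵥ z))
      = 1 / 4 * (x ⬝ᵥ (C * (B + A')⁻¹ * Cᵀ) *ᵥ x)
        + 1 / 2 * (x ⬝ᵥ (C * (B + A')⁻¹ * C') *ᵥ z)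
        + 1 / 4 * (z ⬝ᵥ (C'ᵀ * (B + A')⁻¹ * C') *ᵥ z) := by
    simp only [mulVec_smul, mulVec_add, smul_dotProduct, dotProduct_smul, add_dotProduct,
      dotProduct_add, smul_eq_mul]
    rw [t11, t12, t21, t22]
    ring
  -- finish
  simp only [gaussKer, quadPair_eq_dot]
  rw [mul_mul_mul_comm, ← Real.exp_add, hpre]
  congr 1
  rw [hw]
  simp only [sub_mulVec, dotProduct_sub]
  ring
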